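/- arXiv:funct-an/9601002 — 4 statements merged into one kernel-verified Lean document; each statement's English description precedes it below -/
import Mathlib

section
/- For the normalized Dirichlet eigenfunctions χ_n(y) = √(2/a) sin(πny/a) on [0,a], the inner product ∫_0^a y χ_1'(y) χ_n(y) dy equals (−1)^n · 2n/(n²−1) for every integer n ≥ 2. -/
open Real intervalIntegral

/-- For the normalized Dirichlet modes `χ_n(y) = √(2/a) sin(nπy/a)` on `[0,a]`,
`∫_0^a y χ_1'(y) χ_n(y) dy = (−1)^n · 2n/(n²−1)` for every `n ≥ 2`. -/
theorem inner_y_chi1'_chin (a : ℝ) (ha : 0 < a) (n : ℕ) (hn : 2 ≤ n) :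
    ∫ y in (0:ℝ)..a,
        y * (Real.sqrt (2 / a) * (π / a) * Real.cos (π * y / a))
          * (Real.sqrt (2 / a) * Real.sin ((n : ℝ) * π * y / a))
      = (-1 : ℝ) ^ n * (2 * (n : ℝ) / ((n : ℝ) ^ 2 - 1)) := by
  have ha' : a ≠ 0 := ha.ne'
  have hπ : (π : ℝ) ≠ 0 := Real.pi_ne_zero
  have hb : (2 : ℝ) ≤ (n : ℝ) := by exact_mod_cast hn
  have hp : (n : ℝ) + 1 ≠ 0 := by nlinarith
  have hm : (n : ℝ) - 1 ≠ 0 := by nlinarith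
  set cp : ℝ := ((n : ℝ) + 1) * π / a with hcp
  set cm : ℝ := ((n : ℝ) - 1) * π / a with hcm
  have hcp0 : cp ≠ 0 := by
    rw [hcp]; intro h; rcases mul_eq_zero.1 (div_eq_zero_iff.1 h |>.resolve_right ha') with h | h
    · exact hp h
    · exact hπ h
  have hcm0 : cm ≠ 0 := by
    rw [hcm]; intro h; rcases mul_eq_zero.1 (div_eq_zero_iff.1 h |>.resolve_right ha') with h | h
    · exact hm h
    · exact hπ h
  have hsq : Real.sqrt (2 / a) * Real.sqrt (2 / a) = 2 / a :=
    Real.mul_self_sqrt (by positivity)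
  set F : ℝ → ℝ := fun y => (π / a ^ 2) *
      (Real.sin (cp * y) / cp ^ 2 - y * Real.cos (cp * y) / cp
        + (Real.sin (cm * y) / cm ^ 2 - y * Real.cos (cm * y) / cm)) with hF
  have hderiv : ∀ x ∈ Set.uIcc (0:ℝ) a, HasDerivAt F
      (x * (Real.sqrt (2 / a) * (π / a) * Real.cos (π * x / a))
          * (Real.sqrt (2 / a) * Real.sin ((n : ℝ) * π * x / a))) x := by
    intro x _
    have hlin : ∀ c : ℝ, HasDerivAt (fun y : ℝ => c * y) c x := by
      intro c; simpa using (hasDerivAt_id x).const_mul c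
    have h1 : HasDerivAt (fun y => Real.sin (cp * y) / cp ^ 2)
        (Real.cos (cp * x) * cp / cp ^ 2) x :=
      ((Real.hasDerivAt_sin (cp * x)).comp x (hlin cp)).div_const _
    have h2 : HasDerivAt (fun y => y * Real.cos (cp * y) / cp)
        ((1 * Real.cos (cp * x) + x * (-Real.sin (cp * x) * cp)) / cp) x :=
      ((hasDerivAt_id x).mul ((Real.hasDerivAt_cos (cp * x)).comp x (hlin cp))).div_const _
    have h3 : HasDerivAt (fun y => Real.sin (cm * y) / cm ^ 2)
        (Real.cos (cm * x) * cm / cm ^ 2) x :=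
      ((Real.hasDerivAt_sin (cm * x)).comp x (hlin cm)).div_const _
    have h4 : HasDerivAt (fun y => y * Real.cos (cm * y) / cm)
        ((1 * Real.cos (cm * x) + x * (-Real.sin (cm * x) * cm)) / cm) x :=
      ((hasDerivAt_id x).mul ((Real.hasDerivAt_cos (cm * x)).comp x (hlin cm))).div_const _
    have hD := (((h1.sub h2).add (h3.sub h4)).const_mul (π / a ^ 2))
    refine hD.congr_deriv ?_
    have ep : cp * x = (n : ℝ) * π * x / a + π * x / a := by
      rw [hcp]; field_simp
    have em : cm * x = (n : ℝ) * π * x / a - π * x / a := by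
      rw [hcm]; field_simp
    have hrhs : x * (Real.sqrt (2 / a) * (π / a) * Real.cos (π * x / a))
        * (Real.sqrt (2 / a) * Real.sin ((n : ℝ) * π * x / a))
        = (2 * π / a ^ 2) * (x * Real.sin ((n : ℝ) * π * x / a) * Real.cos (π * x / a)) := by
      linear_combination ((π / a) * x * Real.cos (π * x / a)
        * Real.sin ((n : ℝ) * π * x / a)) * hsq
    rw [hrhs, ep, em, Real.sin_add, Real.cos_add, Real.sin_sub, Real.cos_sub]
    field_simp
    ring
  have hint : IntervalIntegrable (fun y =>
      y * (Real.sqrt (2 / a) * (π / a) * Real.cos (π * y / a))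
        * (Real.sqrt (2 / a) * Real.sin ((n : ℝ) * π * y / a))) MeasureTheory.volume 0 a := by
    apply Continuous.intervalIntegrable
    fun_prop
  rw [intervalIntegral.integral_eq_sub_of_hasDerivAt hderiv hint]
  have hsin_p : Real.sin (cp * a) = 0 := by
    have : cp * a = (↑(n + 1) : ℝ) * π := by rw [hcp]; push_cast; field_simp
    rw [this, Real.sin_nat_mul_pi]
  have hsin_m : Real.sin (cm * a) = 0 := by
    have : cm * a = (↑(n - 1) : ℝ) * π := by
      rw [hcm]; push_cast [Nat.cast_sub (by omega : 1 ≤ n)]; field_simp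
    rw [this, Real.sin_nat_mul_pi]
  have hcosnat : ∀ m : ℕ, Real.cos ((m : ℝ) * π) = (-1 : ℝ) ^ m := by
    intro m; simpa using Real.cos_add_nat_mul_pi 0 m
  have hcos_p : Real.cos (cp * a) = -(-1 : ℝ) ^ n := by
    have : cp * a = (↑(n + 1) : ℝ) * π := by rw [hcp]; push_cast; field_simp
    rw [this, hcosnat (n + 1), pow_succ]; ring
  have hcos_m : Real.cos (cm * a) = -(-1 : ℝ) ^ n := by
    have : cm * a = (↑(n - 1) : ℝ) * π := by
      rw [hcm]; push_cast [Nat.cast_sub (by omega : 1 ≤ n)]; field_simp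
    rw [this, hcosnat (n - 1)]
    have h := pow_succ (-1 : ℝ) (n - 1)
    rw [Nat.sub_add_cancel (by omega : 1 ≤ n)] at h
    linarith
  rw [hF]
  simp only [mul_zero, Real.sin_zero, Real.cos_zero, zero_mul, zero_div, mul_one,
    sub_zero, add_zero, sub_self, hsin_p, hsin_m, hcos_p, hcos_m]
  simp only [hcp, hcm]
  have h1 : ((n : ℝ) + 1) * ((n : ℝ) - 1) ≠ 0 := mul_ne_zero hp hm
  have h2 : ((n : ℝ) ^ 2 - 1) ≠ 0 := by nlinarith
  field_simp
  ring
end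

section
/- If g : [−b,b] → ℝ is continuously differentiable and g(−b) = 0, then ∫_{−b}^b g(x)² dx ≤ (2b)² ∫_{−b}^b g'(x)² dx. -/
open Real intervalIntegral Set

/-- If `g ∈ C¹([−b,b])` with `g(−b) = 0`, then
`∫_{−b}^b g² ≤ (2b)² ∫_{−b}^b (g')²`. -/
theorem poincare_rough (b : ℝ) (hb : 0 < b) (g g' : ℝ → ℝ)
    (hderiv : ∀ x ∈ Icc (-b) b, HasDerivAt g (g' x) x)
    (hg' : ContinuousOn g' (Icc (-b) b))
    (h0 : g (-b) = 0) :
    ∫ x in (-b)..b, (g x) ^ 2 ≤ (2 * b) ^ 2 * ∫ x in (-b)..b, (g' x) ^ 2 := by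
  have hab : (-b : ℝ) ≤ b := by linarith
  have hIcc : uIcc (-b) b = Icc (-b) b := uIcc_of_le hab
  have h2b : (0:ℝ) < 2 * b := by linarith
  set A : ℝ := ∫ x in (-b)..b, |g' x| with hA
  set B : ℝ := ∫ x in (-b)..b, (g' x) ^ 2 with hB
  have hg'abs : ContinuousOn (fun x => |g' x|) (Icc (-b) b) := hg'.abs
  have hg'int : IntervalIntegrable g' MeasureTheory.volume (-b) b :=
    (hg'.mono (by rw [hIcc])).intervalIntegrable
  have habsint : IntervalIntegrable (fun x => |g' x|) MeasureTheory.volume (-b) b :=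
    (hg'abs.mono (by rw [hIcc])).intervalIntegrable
  have hsqint : IntervalIntegrable (fun x => (g' x) ^ 2) MeasureTheory.volume (-b) b :=
    ((hg'.pow 2).mono (by rw [hIcc])).intervalIntegrable
  -- Cauchy-Schwarz: A^2 ≤ 2b * B
  have key : A ^ 2 ≤ 2 * b * B := by
    set c : ℝ := A / (2 * b) with hc
    have h1 : (0:ℝ) ≤ ∫ x in (-b)..b, (|g' x| - c) ^ 2 :=
      integral_nonneg hab (fun u _ => sq_nonneg _)
    have h2 : (∫ x in (-b)..b, (|g' x| - c) ^ 2)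
        = B - 2 * c * A + c ^ 2 * (2 * b) := by
      have expand : ∀ x, (|g' x| - c) ^ 2
          = (g' x) ^ 2 - 2 * c * |g' x| + c ^ 2 := by
        intro x; rw [sub_sq, sq_abs]; ring
      simp_rw [expand]
      rw [intervalIntegral.integral_add (hsqint.sub (habsint.const_mul (2*c)))
          intervalIntegrable_const,
        intervalIntegral.integral_sub hsqint (habsint.const_mul (2*c)),
        intervalIntegral.integral_const_mul, intervalIntegral.integral_const]
      rw [smul_eq_mul, ← hA, ← hB]; ring
    have : 0 ≤ B - 2 * c * A + c ^ 2 * (2 * b) := h2 ▸ h1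
    have hcc : c * (2 * b) = A := by rw [hc, div_mul_cancel₀ A h2b.ne']
    nlinarith [this, sq_nonneg c]
  -- pointwise bound : (g x)^2 ≤ A^2 on Icc
  have hpt : ∀ x ∈ Icc (-b) b, (g x) ^ 2 ≤ A ^ 2 := by
    intro x hx
    have hx1 : -b ≤ x := hx.1
    have hx2 : x ≤ b := hx.2
    have hsub : Icc (-b) x ⊆ Icc (-b) b := Icc_subset_Icc le_rfl hx2
    have hftc : ∫ t in (-b)..x, g' t = g x - g (-b) := by
      apply intervalIntegral.integral_eq_sub_of_hasDerivAt
      · intro t ht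
        rw [uIcc_of_le hx1] at ht
        exact hderiv t (hsub ht)
      · exact hg'int.mono_set (by rw [hIcc, uIcc_of_le hx1]; exact hsub)
    have hgx : g x = ∫ t in (-b)..x, g' t := by rw [hftc, h0, sub_zero]
    have h1 : |g x| ≤ ∫ t in (-b)..x, |g' t| := by
      rw [hgx]; exact intervalIntegral.abs_integral_le_integral_abs hx1
    have h2 : (∫ t in (-b)..x, |g' t|) ≤ A := by
      apply intervalIntegral.integral_mono_interval le_rfl hx1 hx2
      · exact Filter.Eventually.of_forall fun t => abs_nonneg _
      · exact habsint
    have hAnn : (0:ℝ) ≤ A := le_trans (abs_nonneg _) (h1.trans h2)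
    calc (g x) ^ 2 = |g x| ^ 2 := (sq_abs _).symm
      _ ≤ A ^ 2 := by
          apply pow_le_pow_left₀ (abs_nonneg _) (h1.trans h2)
  -- integrate
  have hgcont : ContinuousOn g (Icc (-b) b) := fun x hx =>
    (hderiv x hx).continuousAt.continuousWithinAt
  have hg2int : IntervalIntegrable (fun x => (g x) ^ 2) MeasureTheory.volume (-b) b :=
    ((hgcont.pow 2).mono (by rw [hIcc])).intervalIntegrable
  have step : ∫ x in (-b)..b, (g x) ^ 2 ≤ ∫ _x in (-b)..b, A ^ 2 :=
    intervalIntegral.integral_mono_on hab hg2int intervalIntegrable_const hpt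
  have : (∫ _x in (-b)..b, A ^ 2) = (2 * b) * A ^ 2 := by
    rw [intervalIntegral.integral_const]; ring_nf
  have hBnn : 0 ≤ B := integral_nonneg hab fun u _ => sq_nonneg _
  calc ∫ x in (-b)..b, (g x) ^ 2 ≤ (2 * b) * A ^ 2 := by rw [← this]; exact step
    _ ≤ (2 * b) * (2 * b * B) := by
        apply mul_le_mul_of_nonneg_left key (le_of_lt h2b)
    _ = (2 * b) ^ 2 * B := by ring
end

section
/- If g : [−b,b] → ℝ is continuously differentiable and g(−b) = 0, then ∫_{−b}^b g'(x)² dx ≥ (π/(4b))² ∫_{−b}^b g(x)² dx, with equality attained by g(x) = sin(π(x+b)/(4b)). -/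
open Real intervalIntegral Set

lemma poincare_core (b : ℝ) (hb : 0 < b) (g g' : ℝ → ℝ)
    (hg : ∀ x ∈ Icc (-b) b, HasDerivAt g (g' x) x)
    (hg' : ContinuousOn g' (Icc (-b) b)) (h0 : g (-b) = 0)
    (c : ℝ) (hc : 0 < c) (hcb : c < π / (4 * b)) :
    c ^ 2 * ∫ x in (-b)..b, (g x) ^ 2 ≤ ∫ x in (-b)..b, (g' x) ^ 2 := by
  have hbb : -b ≤ b := by linarith
  have huIcc : uIcc (-b) b = Icc (-b) b := uIcc_of_le hbb
  set ρ : ℝ → ℝ := fun x => -c * Real.tan (c * (x - b)) with hρdef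
  have hcos : ∀ x ∈ Icc (-b) b, 0 < Real.cos (c * (x - b)) := by
    intro x hx
    apply Real.cos_pos_of_mem_Ioo
    have h4 : 4 * b * c < π := by
      have := (div_lt_div_iff₀ (by positivity) (by positivity)).mp
        (show c / 1 < π / (4 * b) by simpa using hcb)
      linarith
    constructor
    · have : c * (x - b) ≥ c * (-2 * b) := by
        apply mul_le_mul_of_nonneg_left _ hc.le
        linarith [hx.1]
      have : -(π/2) < c * (-2*b) := by nlinarith
      linarith [mul_le_mul_of_nonneg_left (by linarith [hx.1] : (-2)*b ≤ x - b) hc.le]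
    · have : c * (x - b) ≤ 0 := mul_nonpos_of_nonneg_of_nonpos hc.le (by linarith [hx.2])
      linarith [Real.pi_div_two_pos]
  have hρ : ∀ x ∈ Icc (-b) b, HasDerivAt ρ (-(c ^ 2 + ρ x ^ 2)) x := by
    intro x hx
    have h1 : HasDerivAt (fun y => c * (y - b)) c x := by
      simpa using ((hasDerivAt_id x).sub_const b).const_mul c
    have h2 : HasDerivAt (fun y => Real.tan (c * (y - b)))
        (1 / Real.cos (c * (x - b)) ^ 2 * c) x :=
      by have := (Real.hasDerivAt_tan (hcos x hx).ne').comp x h1; exact this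
    have h3 := h2.const_mul (-c)
    refine h3.congr_deriv ?_
    have hinv : (1 + Real.tan (c * (x - b)) ^ 2)⁻¹ = Real.cos (c * (x - b)) ^ 2 :=
      Real.inv_one_add_tan_sq (hcos x hx).ne'
    have hcne : Real.cos (c * (x - b)) ^ 2 ≠ 0 := pow_ne_zero 2 (hcos x hx).ne'
    have : 1 / Real.cos (c * (x - b)) ^ 2 = 1 + Real.tan (c * (x - b)) ^ 2 := by
      rw [← hinv]; field_simp
    rw [this, hρdef]; ring
  have hgc : ContinuousOn g (Icc (-b) b) := fun x hx =>
    ((hg x hx).continuousAt).continuousWithinAt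
  have hρc : ContinuousOn ρ (Icc (-b) b) := fun x hx =>
    ((hρ x hx).continuousAt).continuousWithinAt
  -- F and its derivative
  set F : ℝ → ℝ := fun x => g x ^ 2 * ρ x with hFdef
  set F' : ℝ → ℝ := fun x => 2 * g x ^ 1 * g' x * ρ x + g x ^ 2 * (-(c ^ 2 + ρ x ^ 2))
    with hF'def
  have hF : ∀ x ∈ uIcc (-b) b, HasDerivAt F (F' x) x := by
    rw [huIcc]; intro x hx
    exact ((hg x hx).pow 2).mul (hρ x hx)
  have hF'c : ContinuousOn F' (Icc (-b) b) := by
    apply ContinuousOn.add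
    · exact ((continuousOn_const.mul ((hgc.pow 1))).mul hg').mul hρc
    · exact (hgc.pow 2).mul ((continuousOn_const.add (hρc.pow 2)).neg)
  have hF'int : IntervalIntegrable F' MeasureTheory.volume (-b) b :=
    (hF'c.mono (by rw [huIcc])).intervalIntegrable
  have hFTC : (∫ x in (-b)..b, F' x) = 0 := by
    rw [intervalIntegral.integral_eq_sub_of_hasDerivAt hF hF'int]
    have hFb : F b = 0 := by simp [hFdef, hρdef]
    have hFnb : F (-b) = 0 := by simp [hFdef, h0]
    rw [hFb, hFnb, sub_zero]
  -- integrability of remaining pieces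
  have hAc : ContinuousOn (fun x => (g' x - ρ x * g x) ^ 2) (Icc (-b) b) :=
    (hg'.sub (hρc.mul hgc)).pow 2
  have hAint : IntervalIntegrable (fun x => (g' x - ρ x * g x) ^ 2)
      MeasureTheory.volume (-b) b := (hAc.mono (by rw [huIcc])).intervalIntegrable
  have hCint : IntervalIntegrable (fun x => c ^ 2 * g x ^ 2)
      MeasureTheory.volume (-b) b :=
    ((continuousOn_const.mul (hgc.pow 2)).mono (by rw [huIcc])).intervalIntegrable
  have hsplit : (∫ x in (-b)..b, (g' x) ^ 2)
      = (∫ x in (-b)..b, (g' x - ρ x * g x) ^ 2) + (∫ x in (-b)..b, F' x)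
        + ∫ x in (-b)..b, c ^ 2 * g x ^ 2 := by
    rw [← intervalIntegral.integral_add hAint hF'int,
        ← intervalIntegral.integral_add (hAint.add hF'int) hCint]
    apply intervalIntegral.integral_congr
    intro x _
    simp only [hF'def]
    ring
  have hAnn : 0 ≤ ∫ x in (-b)..b, (g' x - ρ x * g x) ^ 2 := by
    apply intervalIntegral.integral_nonneg hbb
    intro x _; positivity
  have hCeq : (∫ x in (-b)..b, c ^ 2 * g x ^ 2) = c ^ 2 * ∫ x in (-b)..b, g x ^ 2 :=
    intervalIntegral.integral_const_mul _ _
  rw [hsplit, hFTC, hCeq]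
  linarith

/-- Sharp Poincaré inequality with one Dirichlet endpoint on `[−b,b]`:
if `g ∈ C¹([−b,b])` with `g(−b) = 0`, then
`∫_{−b}^b (g')² ≥ (π/(4b))² ∫_{−b}^b g²`, and equality is attained by
`g(x) = sin(π(x+b)/(4b))`. -/
theorem poincare_sharp (b : ℝ) (hb : 0 < b) :
    (∀ (g g' : ℝ → ℝ),
        (∀ x ∈ Icc (-b) b, HasDerivAt g (g' x) x) →
        ContinuousOn g' (Icc (-b) b) → g (-b) = 0 →
        (π / (4 * b)) ^ 2 * ∫ x in (-b)..b, (g x) ^ 2 ≤ ∫ x in (-b)..b, (g' x) ^ 2) ∧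
    (∫ x in (-b)..b, (π / (4 * b) * Real.cos (π * (x + b) / (4 * b))) ^ 2)
      = (π / (4 * b)) ^ 2 * ∫ x in (-b)..b, (Real.sin (π * (x + b) / (4 * b))) ^ 2 := by
  have hbb : -b ≤ b := by linarith
  have hk : 0 < π / (4 * b) := by positivity
  constructor
  · intro g g' hg hg' h0
    set cc := π / (4 * b) with hccdef
    have htend : Filter.Tendsto (fun c : ℝ => c ^ 2 * ∫ x in (-b)..b, (g x) ^ 2)
        (nhdsWithin cc (Iio cc)) (nhds (cc ^ 2 * ∫ x in (-b)..b, (g x) ^ 2)) := by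
      apply Filter.Tendsto.mono_left _ nhdsWithin_le_nhds
      exact (Continuous.tendsto (by continuity) cc)
    refine le_of_tendsto htend ?_
    filter_upwards [Ioo_mem_nhdsLT_of_mem (by constructor <;> [exact hk; rfl] :
        cc ∈ Ioc (0:ℝ) cc)] with c hc
    exact poincare_core b hb g g' hg hg' h0 c hc.1 hc.2
  · -- equality case
    set k := π / (4 * b) with hkdef
    have hθ : ∀ x : ℝ, π * (x + b) / (4 * b) = k * (x + b) := by
      intro x; rw [hkdef]; ring
    simp only [hθ]
    have hsq : ∀ x : ℝ, (k * Real.cos (k * (x + b))) ^ 2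
        = k ^ 2 * Real.sin (k * (x + b)) ^ 2 + k ^ 2 * Real.cos (2 * (k * (x + b))) := by
      intro x
      rw [Real.cos_two_mul, Real.sin_sq]; ring
    have hlin1 : Continuous fun x : ℝ => k * (x + b) :=
      continuous_const.mul (continuous_id.add continuous_const)
    have hlin2 : Continuous fun x : ℝ => 2 * (k * (x + b)) := continuous_const.mul hlin1
    have hc2int : IntervalIntegrable (fun x => k ^ 2 * Real.cos (2 * (k * (x + b))))
        MeasureTheory.volume (-b) b :=
      (continuous_const.mul (Real.continuous_cos.comp hlin2)).intervalIntegrable _ _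
    have hs2int : IntervalIntegrable (fun x => k ^ 2 * Real.sin (k * (x + b)) ^ 2)
        MeasureTheory.volume (-b) b :=
      (continuous_const.mul ((Real.continuous_sin.comp hlin1).pow 2)).intervalIntegrable _ _
    have hzero : (∫ x in (-b)..b, k ^ 2 * Real.cos (2 * (k * (x + b)))) = 0 := by
      have hH : ∀ x ∈ uIcc (-b) b,
          HasDerivAt (fun y => k ^ 2 * (Real.sin (2 * (k * (y + b))) / (2 * k)))
            (k ^ 2 * Real.cos (2 * (k * (x + b)))) x := by
        intro x _
        have h1 : HasDerivAt (fun y : ℝ => 2 * (k * (y + b))) (2 * k) x := by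
          simpa using (((hasDerivAt_id x).add_const b).const_mul k).const_mul 2
        have h2 := ((Real.hasDerivAt_sin (2 * (k * (x + b)))).comp x h1)
        have h3 := (h2.div_const (2 * k)).const_mul (k ^ 2)
        have hk2 : (2 * k : ℝ) ≠ 0 := by positivity
        refine h3.congr_deriv ?_
        rw [mul_div_cancel_right₀ _ hk2]
      rw [intervalIntegral.integral_eq_sub_of_hasDerivAt hH hc2int]
      have h4 : 2 * (k * (b + b)) = π := by
        rw [hkdef]; field_simp; ring
      have h5 : 2 * (k * (-b + b)) = 0 := by ring
      rw [h4, h5]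
      simp
    calc (∫ x in (-b)..b, (k * Real.cos (k * (x + b))) ^ 2)
        = ∫ x in (-b)..b, (k ^ 2 * Real.sin (k * (x + b)) ^ 2
            + k ^ 2 * Real.cos (2 * (k * (x + b)))) := by
          apply intervalIntegral.integral_congr; intro x _; exact hsq x
      _ = (∫ x in (-b)..b, k ^ 2 * Real.sin (k * (x + b)) ^ 2)
            + ∫ x in (-b)..b, k ^ 2 * Real.cos (2 * (k * (x + b))) :=
          intervalIntegral.integral_add hs2int hc2int
      _ = k ^ 2 * ∫ x in (-b)..b, Real.sin (k * (x + b)) ^ 2 := by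
          rw [hzero, add_zero, intervalIntegral.integral_const_mul]
end

section
/- Let d₀ > 0, α ≠ 0, M > 0, λ ≠ 0. Among all functions φ ∈ H¹(−∞, −b) with φ(−b) = α, the functional L(φ) = (∫_{−∞}^{−b} φ'(x)² dx − λ²α² d₀ M) / ∫_{−∞}^{−b} φ(x)² dx attains its minimum value −λ⁴ d₀² M² at φ₀(x) = α e^{κ(x+b)} with κ = λ² d₀ M. -/
open Real MeasureTheory Set Filter

open scoped Topology

private lemma exp_affine_int (c d a : ℝ) (hc : 0 < c) :
    IntegrableOn (fun x => Real.exp (c * x + d)) (Iic a) ∧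
    ∫ x in Iic a, Real.exp (c * x + d) = Real.exp (c * a + d) / c := by
  have hderiv : ∀ x : ℝ, HasDerivAt (fun y => Real.exp (c * y + d) / c)
      (Real.exp (c * x + d)) x := by
    intro x
    have h1 : HasDerivAt (fun y : ℝ => c * y + d) c x := by
      simpa using ((hasDerivAt_id x).const_mul c).add_const d
    have h2 := h1.exp.div_const c
    simpa [mul_div_assoc, mul_div_cancel_right₀ _ hc.ne'] using h2
  have hpos : ∀ x : ℝ, 0 ≤ Real.exp (c * x + d) / c :=
    fun x => div_nonneg (Real.exp_pos _).le hc.le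
  have hint : IntegrableOn (fun x => Real.exp (c * x + d)) (Iic a) := by
    refine integrableOn_Iic_of_intervalIntegral_norm_bounded
      (Real.exp (c * a + d) / c) a
      (fun y => ((Real.continuous_exp.comp (by continuity)).integrableOn_Ioc)) tendsto_id ?_
    filter_upwards [eventually_le_atBot a] with y hy
    simp only [id_eq]
    have hii : IntervalIntegrable (fun x => Real.exp (c * x + d)) volume y a :=
      (Real.continuous_exp.comp (by continuity)).intervalIntegrable _ _
    have heq : ∫ x in y..a, ‖Real.exp (c * x + d)‖ = ∫ x in y..a, Real.exp (c * x + d) := by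
      congr 1; funext x; exact Real.norm_of_nonneg (Real.exp_pos _).le
    rw [heq, intervalIntegral.integral_eq_sub_of_hasDerivAt
      (fun x _ => hderiv x) hii]
    have := hpos y
    linarith
  refine ⟨hint, ?_⟩
  have htend : Tendsto (fun y => Real.exp (c * y + d) / c) atBot (𝓝 0) := by
    have h1 : Tendsto (fun y : ℝ => c * y + d) atBot atBot := by
      apply Filter.tendsto_atBot_add_const_right
      exact (tendsto_const_mul_atBot_of_pos hc).2 tendsto_id
    simpa using (Real.tendsto_exp_atBot.comp h1).div_const c
  have := integral_Iic_of_hasDerivAt_of_tendsto' (f := fun y => Real.exp (c * y + d) / c)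
    (fun x _ => hderiv x) hint htend
  rw [this, sub_zero]

/-- Among all `H¹` functions `φ` on `(−∞,−b)` with `φ(−b) = α`, the functional
`L(φ) = (∫ (φ')² − λ²α²d₀M)/∫ φ²` attains its minimum value `−λ⁴d₀²M²` at
`φ₀(x) = α e^{κ(x+b)}` with `κ = λ²d₀M`. -/
theorem tail_minimization (b d₀ M α lam : ℝ) (hd : 0 < d₀) (hM : 0 < M)
    (hα : α ≠ 0) (hlam : lam ≠ 0) :
    (let κ : ℝ := lam ^ 2 * d₀ * M
     let φ₀ : ℝ → ℝ := fun x => α * Real.exp (κ * (x + b))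
     ((∫ x in Iio (-b), (deriv φ₀ x) ^ 2) - lam ^ 2 * α ^ 2 * d₀ * M) /
        (∫ x in Iio (-b), (φ₀ x) ^ 2) = -(lam ^ 4 * d₀ ^ 2 * M ^ 2)) ∧
    ∀ (φ φ' : ℝ → ℝ), (∀ x : ℝ, HasDerivAt φ (φ' x) x) → φ (-b) = α →
      IntegrableOn (fun x => (φ x) ^ 2) (Iio (-b)) →
      IntegrableOn (fun x => (φ' x) ^ 2) (Iio (-b)) →
      -(lam ^ 4 * d₀ ^ 2 * M ^ 2) ≤
        ((∫ x in Iio (-b), (φ' x) ^ 2) - lam ^ 2 * α ^ 2 * d₀ * M) /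
          (∫ x in Iio (-b), (φ x) ^ 2) := by
  have hlam2 : 0 < lam ^ 2 := by positivity
  set κ : ℝ := lam ^ 2 * d₀ * M with hκdef
  have hκ : 0 < κ := by positivity
  have hIioIic : ∀ f : ℝ → ℝ, ∫ x in Iio (-b), f x = ∫ x in Iic (-b), f x :=
    fun f => setIntegral_congr_set Iio_ae_eq_Iic
  constructor
  · -- explicit minimizer
    intro κ' φ₀
    have hderiv : ∀ x : ℝ, HasDerivAt (fun x => α * Real.exp (κ * (x + b)))
        (α * (Real.exp (κ * (x + b)) * κ)) x := by
      intro x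
      have h1 : HasDerivAt (fun y : ℝ => κ * (y + b)) κ x := by
        simpa using (((hasDerivAt_id x).add_const b).const_mul κ)
      exact h1.exp.const_mul α
    have hdval : ∀ x : ℝ, deriv (fun x => α * Real.exp (κ * (x + b))) x
        = α * (Real.exp (κ * (x + b)) * κ) := fun x => (hderiv x).deriv
    have hbase := exp_affine_int (2 * κ) (2 * κ * b) (-b) (by positivity)
    have hval : ∫ x in Iic (-b), Real.exp (2 * κ * x + 2 * κ * b) = 1 / (2 * κ) := by
      rw [hbase.2]
      norm_num
    have hsq : ∀ x : ℝ, Real.exp (κ * (x + b)) ^ 2 = Real.exp (2 * κ * x + 2 * κ * b) := by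
      intro x
      rw [pow_two, ← Real.exp_add]
      ring_nf
    have hI2 : ∫ x in Iio (-b), (α * Real.exp (κ * (x + b))) ^ 2 = α ^ 2 * (1 / (2 * κ)) := by
      rw [hIioIic]
      have : (fun x => (α * Real.exp (κ * (x + b))) ^ 2)
          = fun x => α ^ 2 * Real.exp (2 * κ * x + 2 * κ * b) := by
        funext x; rw [mul_pow, hsq]
      rw [this, integral_const_mul, hval]
    have hI1 : ∫ x in Iio (-b), (deriv (fun x => α * Real.exp (κ * (x + b))) x) ^ 2
        = α ^ 2 * κ ^ 2 * (1 / (2 * κ)) := by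
      rw [hIioIic]
      have : (fun x => (deriv (fun x => α * Real.exp (κ * (x + b))) x) ^ 2)
          = fun x => α ^ 2 * κ ^ 2 * Real.exp (2 * κ * x + 2 * κ * b) := by
        funext x
        rw [hdval x, mul_pow, mul_pow, hsq]
        ring
      rw [this, integral_const_mul, hval]
    have h1 : lam ^ 2 * α ^ 2 * d₀ * M = κ * α ^ 2 := by rw [hκdef]; ring
    have h2 : lam ^ 4 * d₀ ^ 2 * M ^ 2 = κ ^ 2 := by rw [hκdef]; ring
    show ((∫ x in Iio (-b), (deriv (fun x => α * Real.exp (κ * (x + b))) x) ^ 2)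
        - lam ^ 2 * α ^ 2 * d₀ * M) /
        (∫ x in Iio (-b), (α * Real.exp (κ * (x + b))) ^ 2) = -(lam ^ 4 * d₀ ^ 2 * M ^ 2)
    rw [hI1, hI2, h1, h2]
    field_simp
    ring
  · intro φ φ' hφ hφb hφ2 hφ'2
    have hφ2' : IntegrableOn (fun x => (φ x) ^ 2) (Iic (-b)) :=
      hφ2.congr_set_ae Iio_ae_eq_Iic.symm
    have hφ'2' : IntegrableOn (fun x => (φ' x) ^ 2) (Iic (-b)) :=
      hφ'2.congr_set_ae Iio_ae_eq_Iic.symm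
    have hφcont : Continuous φ :=
      continuous_iff_continuousAt.2 fun x => (hφ x).continuousAt
    have hφ'eq : φ' = deriv φ := funext fun x => ((hφ x).deriv).symm
    have hφ'meas : Measurable φ' := by rw [hφ'eq]; exact measurable_deriv φ
    have hprodmeas : AEStronglyMeasurable (fun x => φ x * φ' x)
        (volume.restrict (Iic (-b))) :=
      (hφcont.measurable.mul hφ'meas).aestronglyMeasurable
    have hφφ' : IntegrableOn (fun x => φ x * φ' x) (Iic (-b)) := by
      refine Integrable.mono' ((hφ2'.add hφ'2').div_const 2) hprodmeas ?_
      filter_upwards with x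
      simp only [Pi.add_apply]
      rw [Real.norm_eq_abs, abs_le]
      constructor <;> nlinarith [sq_nonneg (φ x - φ' x), sq_nonneg (φ x + φ' x)]
    have hg2 : ∀ x : ℝ, HasDerivAt (fun y => (φ y) ^ 2) (2 * (φ x * φ' x)) x := by
      intro x
      have := (hφ x).fun_pow 2
      simpa [mul_comm, mul_assoc, mul_left_comm] using this
    have hg2'int : IntegrableOn (fun x => 2 * (φ x * φ' x)) (Iic (-b)) :=
      hφφ'.const_mul 2
    have htend0 : Tendsto (fun x => (φ x) ^ 2) atBot (𝓝 0) :=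
      tendsto_zero_of_hasDerivAt_of_integrableOn_Iic (fun x _ => hg2 x) hg2'int hφ2'
    have hFTC : ∫ x in Iic (-b), 2 * (φ x * φ' x) = α ^ 2 := by
      rw [integral_Iic_of_hasDerivAt_of_tendsto' (fun x _ => hg2 x) hg2'int htend0,
        hφb, sub_zero]
    have hpair : ∫ x in Iic (-b), φ x * φ' x = α ^ 2 / 2 := by
      rw [integral_const_mul] at hFTC
      linarith
    have hexpand : (fun x => (φ' x - κ * φ x) ^ 2)
        = fun x => ((φ' x) ^ 2 - 2 * κ * (φ x * φ' x)) + κ ^ 2 * (φ x) ^ 2 := by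
      funext x; ring
    have hkey : 0 ≤ (∫ x in Iic (-b), (φ' x) ^ 2) - 2 * κ * (α ^ 2 / 2)
        + κ ^ 2 * ∫ x in Iic (-b), (φ x) ^ 2 := by
      have h0 : 0 ≤ ∫ x in Iic (-b), (φ' x - κ * φ x) ^ 2 :=
        integral_nonneg fun x => sq_nonneg _
      have ha : Integrable (fun x => (φ' x) ^ 2 - 2 * κ * (φ x * φ' x))
          (volume.restrict (Iic (-b))) := hφ'2'.sub (hφφ'.const_mul (2 * κ))
      have hb' : Integrable (fun x => κ ^ 2 * (φ x) ^ 2)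
          (volume.restrict (Iic (-b))) := hφ2'.const_mul (κ ^ 2)
      have hc' : Integrable (fun x => 2 * κ * (φ x * φ' x))
          (volume.restrict (Iic (-b))) := hφφ'.const_mul (2 * κ)
      rwa [hexpand, integral_add ha hb', integral_sub hφ'2' hc',
        integral_const_mul, integral_const_mul, hpair] at h0
    have h1 : lam ^ 2 * α ^ 2 * d₀ * M = κ * α ^ 2 := by rw [hκdef]; ring
    have h2 : lam ^ 4 * d₀ ^ 2 * M ^ 2 = κ ^ 2 := by rw [hκdef]; ring
    rw [h1, h2, hIioIic, hIioIic]
    set I2 := ∫ x in Iic (-b), (φ x) ^ 2 with hI2def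
    have hI2nn : 0 ≤ I2 := integral_nonneg fun x => sq_nonneg _
    rcases hI2nn.eq_or_lt with h | h
    · rw [← h, div_zero]
      have : 0 ≤ κ ^ 2 := sq_nonneg κ
      linarith
    · rw [le_div_iff₀ h]
      nlinarith [hkey]
end
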